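/- Let d ≥ 1 and let L be a finite graded lattice of rank d+1 with atom set A and coatom set C. Then there exists a continuous map f : Δ(A) → ℝ^d such that for every point u ∈ ℝ^d, the number of coatoms c ∈ C with u ∈ f(⟨A_c⟩) is at most d · max_{a ∈ A} |C_a|. -/

import Mathlib

set_option linter.unusedSectionVars false
set_option maxHeartbeats 1000000
open scoped Classical

/-- The geometric face `⟨σ⟩` of the standard simplex on a finite vertex set `α`:
points of the standard simplex vanishing outside `σ`. -/
def geomFace {α : Type*} [Fintype α] (σ : Set α) : Set (α → ℝ) :=
  {x | x ∈ stdSimplex ℝ α ∧ ∀ v, v ∉ σ → x v = 0}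


section OrderLemmas
variable {L : Type*} [Fintype L] [Lattice L] [BoundedOrder L] (rk : L → ℕ)

/-- between `x < y` there is a cover step. -/
lemma my_exists_covBy {x y : L} (hxy : x < y) : ∃ z : L, x ⋖ z ∧ z ≤ y := by
  classical
  have hfin : ({w : L | x < w ∧ w ≤ y}).Finite := Set.toFinite _
  have hne : ({w : L | x < w ∧ w ≤ y}).Nonempty := ⟨y, hxy, le_rfl⟩
  obtain ⟨z, hz⟩ := hfin.exists_minimal hne
  have hmin : ∀ w ∈ {w : L | x < w ∧ w ≤ y}, w ≤ z → z = w :=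
    fun w hw h => le_antisymm (hz.2 hw h) h
  replace hz := hz.1
  refine ⟨z, ⟨hz.1, ?_⟩, hz.2⟩
  intro w hw hwz
  have : w ∈ {w : L | x < w ∧ w ≤ y} := ⟨hw, hwz.le.trans hz.2⟩
  exact absurd (hmin w this hwz.le) hwz.ne'

lemma rk_lt_of_lt (hcov : ∀ x y : L, x ⋖ y → rk y = rk x + 1)
    {x y : L} (hxy : x < y) : rk x < rk y := by
  have H : ∀ x : L, ∀ y, x < y → rk x < rk y := by
    intro x
    induction x using WellFoundedGT.induction with
    | _ x IH =>
      intro y hxy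
      obtain ⟨z, hz, hzy⟩ := my_exists_covBy hxy
      rcases eq_or_lt_of_le hzy with rfl | hlt
      · rw [hcov _ _ hz]; omega
      · have h1 := hcov _ _ hz
        have h2 := IH z hz.lt y hlt
        omega
  exact H x y hxy

lemma rk_le_of_le (hcov : ∀ x y : L, x ⋖ y → rk y = rk x + 1)
    {x y : L} (hxy : x ≤ y) : rk x ≤ rk y := by
  rcases eq_or_lt_of_le hxy with rfl | h
  · exact le_rfl
  · exact (rk_lt_of_lt rk hcov h).le

lemma exists_atom_le (hbot : rk ⊥ = 0) (hcov : ∀ x y : L, x ⋖ y → rk y = rk x + 1)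
    {z : L} (hz : z ≠ ⊥) : ∃ a : L, rk a = 1 ∧ a ≤ z := by
  obtain ⟨a, ha, haz⟩ := my_exists_covBy (bot_lt_iff_ne_bot.2 hz)
  exact ⟨a, by rw [hcov _ _ ha, hbot], haz⟩

end OrderLemmas

section Helpers
variable {K : Type*} [Field K] {V : Type*} [AddCommGroup V] [Module K V]

lemma exists_dual_one {v : V} (hv : v ≠ 0) : ∃ g : V →ₗ[K] K, g v = 1 := by
  have hli : LinearIndepOn K id ({v} : Set V) :=
    LinearIndepOn.singleton (v := id) hv
  let B := Module.Basis.extend hli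
  have hvmem : v ∈ hli.extend (Set.subset_univ _) :=
    hli.subset_extend _ (Set.mem_singleton v)
  refine ⟨B.coord ⟨v, hvmem⟩, ?_⟩
  have h1 : B ⟨v, hvmem⟩ = v := Module.Basis.extend_apply_self hli ⟨v, hvmem⟩
  have h2 : (B.coord ⟨v, hvmem⟩) v = (B.coord ⟨v, hvmem⟩) (B ⟨v, hvmem⟩) :=
    congrArg _ h1.symm
  rw [h2, Module.Basis.coord_apply, Module.Basis.repr_self]
  simp

lemma exists_dual_vanishing {W : Submodule K V} {v : V} (hv : v ∉ W) :
    ∃ g : V →ₗ[K] K, (∀ w ∈ W, g w = 0) ∧ g v = 1 := by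
  have hne : W.mkQ v ≠ 0 := by
    intro h
    rw [Submodule.mkQ_apply] at h
    exact hv ((Submodule.Quotient.mk_eq_zero W).1 h)
  obtain ⟨g', hg'⟩ := exists_dual_one (K := K) hne
  refine ⟨g'.comp W.mkQ, ?_, ?_⟩
  · intro w hw
    simp only [LinearMap.comp_apply, Submodule.mkQ_apply]
    rw [(Submodule.Quotient.mk_eq_zero W).2 hw, map_zero]
  · simpa using hg'

lemma dual_pi_sum {ι : Type*} [Fintype ι] [DecidableEq ι] (g : (ι → K) →ₗ[K] K) (v : ι → K) :
    g v = ∑ j, v j * g (Pi.single j 1) := by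
  have hv : v = ∑ j, v j • (Pi.single j (1 : K) : ι → K) := by
    funext i
    rw [Finset.sum_apply]
    simp [Pi.single_apply, Finset.sum_ite_eq' Finset.univ i]
  conv_lhs => rw [hv]
  rw [map_sum]
  congr 1
  funext j
  rw [map_smul, smul_eq_mul]

lemma dual_pi_sum' {ι : Type*} [Fintype ι] [DecidableEq ι] (g : (ι → K) →ₗ[K] K) (v : ι → K) :
    ∑ j, g (Pi.single j 1) * v j = g v := by
  rw [dual_pi_sum g v]
  exact Finset.sum_congr rfl (fun j _ => mul_comm _ _)

end Helpers

section Algebraic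
open MvPolynomial
variable {L : Type*} [Fintype L]
variable (rk : L → ℕ) (d : ℕ)

local notation "R" => MvPolynomial L ℚ
local notation "F" => FractionRing (MvPolynomial L ℚ)

lemma no_solution (T : Finset (Fin d)) (hT : T.Nonempty)
    (Z : Fin (d+1) → Fin d → L)
    (hrank : ∀ j, ∀ i ∈ T, rk (Z j i) = (i : ℕ) + 1)
    (htops : Function.Injective (fun j => Z j (T.max' hT)))
    (U : {i // i ∈ T} → F)
    (hU : ∀ j, ∑ i : {i // i ∈ T}, U i * algebraMap R F (X (Z j (i : Fin d))) = 1)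
    (ht : U ⟨T.max' hT, T.max'_mem hT⟩ ≠ 0) : False := by
  set t : Fin d := T.max' hT with htdef
  set tsub : {i // i ∈ T} := ⟨t, T.max'_mem hT⟩ with htsubdef
  set φ := algebraMap R F with hφ
  have hinj : Function.Injective φ := IsFractionRing.injective R F
  set Cvec : {i // i ∈ T} → (Fin (d+1) → F) := fun i j => φ (X (Z j (i : Fin d))) with hCvec
  obtain ⟨b, hb⟩ := IsLocalization.exist_integer_multiples (nonZeroDivisors R) Finset.univ U
  choose p hp using fun i => hb i (Finset.mem_univ i)
  have hbne : φ (b : R) ≠ 0 := fun h => nonZeroDivisors.coe_ne_zero b (hinj (by rw [h, map_zero]))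
  have hReq : ∀ j, ∑ i : {i // i ∈ T}, p i * X (Z j (i : Fin d)) = (b : R) := by
    intro j
    apply hinj
    rw [map_sum]
    have hterm : ∀ i ∈ (Finset.univ : Finset {i // i ∈ T}),
        φ (p i * X (Z j (i : Fin d))) = φ (b : R) * (U i * φ (X (Z j (i : Fin d)))) := by
      intro i _
      rw [map_mul, hp i, Algebra.smul_def]
      ring
    rw [Finset.sum_congr rfl hterm, ← Finset.mul_sum, hU j, mul_one]
  have hpt : p tsub ≠ 0 := by
    intro h
    apply ht
    have h1 := hp tsub
    rw [h, map_zero] at h1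
    have h2 := h1.symm
    rw [Algebra.smul_def] at h2
    rcases mul_eq_zero.1 h2 with h' | h'
    · exact absurd h' hbne
    · exact h'
  have hPtne : φ (p tsub) ≠ 0 := fun h => hpt (hinj (by rw [h, map_zero]))
  have hvZ : ∀ j0 j : Fin (d+1), ∀ i : {i // i ∈ T},
      Z j (i : Fin d) = Z j0 t → j = j0 ∧ (i : Fin d) = t := by
    intro j0 j i heq
    have h1 : rk (Z j (i : Fin d)) = ((i : Fin d) : ℕ) + 1 := hrank j _ i.2
    have h2 : rk (Z j0 t) = (t : ℕ) + 1 := hrank j0 t (T.max'_mem hT)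
    rw [heq, h2] at h1
    have hit : (i : Fin d) = t := Fin.ext (by omega)
    refine ⟨?_, hit⟩
    apply htops
    show Z j t = Z j0 t
    have heq' : Z j (i : Fin d) = Z j0 t := heq
    rw [hit] at heq'
    exact heq'
  have hderiv : ∀ j0 j : Fin (d+1),
      (∑ i : {i // i ∈ T}, (pderiv (Z j0 t)) (p i) * X (Z j (i : Fin d)))
        + (if j = j0 then p tsub else 0) = (pderiv (Z j0 t)) (b : R) := by
    intro j0 j
    have h0 := congrArg (pderiv (Z j0 t)) (hReq j)
    rw [map_sum] at h0
    have h1 : ∀ i ∈ (Finset.univ : Finset {i // i ∈ T}),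
        (pderiv (Z j0 t)) (p i * X (Z j (i : Fin d))) =
        (pderiv (Z j0 t)) (p i) * X (Z j (i : Fin d))
          + (if i = tsub ∧ j = j0 then p i else 0) := by
      intro i _
      rw [pderiv_mul, pderiv_X, Pi.single_apply]
      by_cases hc : Z j (i : Fin d) = Z j0 t
      · obtain ⟨hj, hi⟩ := hvZ j0 j i hc
        rw [if_pos hc, mul_one, if_pos ⟨Subtype.ext hi, hj⟩]
      · rw [if_neg hc, mul_zero, if_neg]
        rintro ⟨hi, hj⟩
        apply hc
        rw [hi, hj]
    have h2 : (∑ i : {i // i ∈ T}, if i = tsub ∧ j = j0 then p i else 0)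
        = (if j = j0 then p tsub else 0) := by
      by_cases hj : j = j0
      · simp only [hj, and_true]
        rw [Finset.sum_ite_eq' Finset.univ tsub p]
        simp
      · simp [hj]
    rw [Finset.sum_congr rfl h1, Finset.sum_add_distrib, h2] at h0
    exact h0
  -- move to F and conclude span
  have hspan : ∀ j0 : Fin (d+1), (Pi.single j0 (1:F) : Fin (d+1) → F) ∈
      Submodule.span F (Set.range Cvec) := by
    intro j0
    have hFderiv : ∀ j : Fin (d+1),
        (∑ i : {i // i ∈ T}, φ ((pderiv (Z j0 t)) (p i)) * Cvec i j)
          + (if j = j0 then φ (p tsub) else 0) = φ ((pderiv (Z j0 t)) (b : R)) := by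
      intro j
      have := congrArg φ (hderiv j0 j)
      rw [map_add, map_sum] at this
      rw [← this]
      congr 1
      · apply Finset.sum_congr rfl
        intro i _
        rw [map_mul]
      · rw [apply_ite φ, map_zero]
    have key : (Pi.single j0 (1:F) : Fin (d+1) → F) =
        ∑ i : {i // i ∈ T}, ((φ (p tsub))⁻¹ * (φ ((pderiv (Z j0 t)) (b : R)) * U i
          - φ ((pderiv (Z j0 t)) (p i)))) • Cvec i := by
      funext j
      rw [Finset.sum_apply]
      have expand : ∀ i ∈ (Finset.univ : Finset {i // i ∈ T}),
          (((φ (p tsub))⁻¹ * (φ ((pderiv (Z j0 t)) (b : R)) * U i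
            - φ ((pderiv (Z j0 t)) (p i)))) • Cvec i) j
          = (φ (p tsub))⁻¹ * (φ ((pderiv (Z j0 t)) (b : R)) * (U i * Cvec i j))
            - (φ (p tsub))⁻¹ * (φ ((pderiv (Z j0 t)) (p i)) * Cvec i j) := by
        intro i _
        rw [Pi.smul_apply, smul_eq_mul]
        ring
      rw [Finset.sum_congr rfl expand, Finset.sum_sub_distrib, ← Finset.mul_sum, ← Finset.mul_sum,
        ← Finset.mul_sum, hU j]
      have hs := hFderiv j
      have : ∑ i : {i // i ∈ T}, φ ((pderiv (Z j0 t)) (p i)) * Cvec i j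
          = φ ((pderiv (Z j0 t)) (b : R)) - (if j = j0 then φ (p tsub) else 0) := by
        rw [← hs]; ring
      rw [this, mul_one, Pi.single_apply]
      by_cases hj : j = j0
      · rw [if_pos hj, if_pos hj]
        field_simp
        ring
      · rw [if_neg hj, if_neg hj]
        ring
    rw [key]
    exact Submodule.sum_smul_mem _ _ (fun i _ => Submodule.subset_span (Set.mem_range_self i))
  have htop2 : Submodule.span F (Set.range Cvec) = ⊤ := by
    rw [eq_top_iff]
    intro w _
    have hw : w = ∑ j, w j • (Pi.single j (1:F) : Fin (d+1) → F) := by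
      funext i
      rw [Finset.sum_apply]
      have : ∀ j ∈ (Finset.univ : Finset (Fin (d+1))),
          (w j • (Pi.single j (1:F) : Fin (d+1) → F)) i = if i = j then w j else 0 := by
        intro j _
        rw [Pi.smul_apply, smul_eq_mul, Pi.single_apply]
        split <;> simp_all
      rw [Finset.sum_congr rfl this]
      rw [Finset.sum_ite_eq Finset.univ i w]
      simp
    rw [hw]
    exact Submodule.sum_smul_mem _ _ (fun j _ => hspan j)
  have hle : Module.finrank F ↥(Submodule.span F (Set.range Cvec)) ≤ d := by
    refine le_trans (finrank_span_le_card _) ?_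
    rw [Set.toFinset_range]
    refine le_trans Finset.card_image_le ?_
    rw [Finset.card_univ, Fintype.card_coe]
    exact le_trans (Finset.card_le_univ T) (by simp)
  rw [htop2, finrank_top, Module.finrank_fintype_fun_eq_card, Fintype.card_fin] at hle
  omega

lemma cert_exists (T : Finset (Fin d)) (hT : T.Nonempty)
    (Z : Fin (d+1) → Fin d → L)
    (hrank : ∀ j, ∀ i ∈ T, rk (Z j i) = (i : ℕ) + 1)
    (htops : Function.Injective (fun j => Z j (T.max' hT))) :
    ∃ (A : Fin (d+1) → MvPolynomial L ℚ) (β γ : MvPolynomial L ℚ),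
      (∀ i ∈ T, i ≠ T.max' hT → ∑ j, A j * X (Z j i) = 0) ∧
      (∑ j, A j * X (Z j (T.max' hT)) = β) ∧
      (∑ j, A j = γ) ∧
      ((β = 0 ∧ γ ≠ 0) ∨ (β ≠ 0 ∧ γ = 0)) := by
  set t : Fin d := T.max' hT with htdef
  set tsub : {i // i ∈ T} := ⟨t, T.max'_mem hT⟩ with htsubdef
  set φ := algebraMap R F with hφ
  have hinj : Function.Injective φ := IsFractionRing.injective R F
  set Cvec : {i // i ∈ T} → (Fin (d+1) → F) := fun i j => φ (X (Z j (i : Fin d))) with hCvec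
  set one : Fin (d+1) → F := fun _ => 1 with hone
  -- step 1: find F-certificate Y
  have main : ∃ (Y : Fin (d+1) → F) (βF γF : F),
      (∀ i : {i // i ∈ T}, i ≠ tsub → ∑ j, Y j * Cvec i j = 0) ∧
      (∑ j, Y j * Cvec tsub j = βF) ∧
      (∑ j, Y j = γF) ∧
      ((βF = 0 ∧ γF = 1) ∨ (βF = 1 ∧ γF = 0)) := by
    by_cases hcase : one ∈ Submodule.span F (Set.range Cvec)
    · -- case 2: solution exists
      obtain ⟨U₀, hU₀⟩ := (Submodule.mem_span_range_iff_exists_fun F).1 hcase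
      have hU₀eq : ∀ j, ∑ i : {i // i ∈ T}, U₀ i * Cvec i j = 1 := by
        intro j
        have := congrFun hU₀ j
        rw [Finset.sum_apply] at this
        simpa using this
      have hU₀t : U₀ tsub = 0 := by
        by_contra hne
        exact no_solution rk d T hT Z hrank htops U₀ hU₀eq hne
      set Dvec : {i // i ∈ T} → (Fin (d+1) → F) :=
        fun i => if i = tsub then 0 else Cvec i with hDvec
      have hnot : Cvec tsub ∉ Submodule.span F (Set.range Dvec) := by
        intro hmem
        obtain ⟨μ, hμ⟩ := (Submodule.mem_span_range_iff_exists_fun F).1 hmem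
        set ν : {i // i ∈ T} → F := fun i => if i = tsub then 0 else μ i with hν
        have hνsum : ∑ i : {i // i ∈ T}, ν i • Cvec i = Cvec tsub := by
          rw [← hμ]
          apply Finset.sum_congr rfl
          intro i _
          by_cases hi : i = tsub
          · rw [hν]; simp only [hi, if_pos rfl]
            rw [hDvec]; simp only [if_pos rfl]
            simp
          · rw [hν]; simp only [if_neg hi]
            rw [hDvec]; simp only [if_neg hi]
        set U' : {i // i ∈ T} → F :=
          fun i => U₀ i + (if i = tsub then 1 else 0) - ν i with hU'
        have hU'eq : ∀ j, ∑ i : {i // i ∈ T}, U' i * Cvec i j = 1 := by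
          intro j
          have e1 : ∀ i ∈ (Finset.univ : Finset {i // i ∈ T}),
              U' i * Cvec i j = U₀ i * Cvec i j
                + (if i = tsub then Cvec i j else 0) - ν i * Cvec i j := by
            intro i _
            rw [hU']
            by_cases hi : i = tsub
            · simp only [if_pos hi]; ring
            · simp only [if_neg hi]; ring
          rw [Finset.sum_congr rfl e1]
          rw [Finset.sum_sub_distrib, Finset.sum_add_distrib]
          rw [hU₀eq j]
          have e2 : (∑ i : {i // i ∈ T}, if i = tsub then Cvec i j else 0) = Cvec tsub j := by
            rw [Finset.sum_ite_eq' Finset.univ tsub (fun i => Cvec i j)]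
            simp
          have e3 : ∑ i : {i // i ∈ T}, ν i * Cvec i j = Cvec tsub j := by
            have := congrFun hνsum j
            rw [Finset.sum_apply] at this
            simpa using this
          rw [e2, e3]
          ring
        have hU't : U' tsub ≠ 0 := by
          rw [hU']
          simp only [if_pos rfl]
          rw [hU₀t, hν]
          simp
        exact no_solution rk d T hT Z hrank htops U' hU'eq hU't
      obtain ⟨g, hg0, hg1⟩ := exists_dual_vanishing hnot
      refine ⟨fun j => g (Pi.single j 1), 1, 0, ?_, ?_, ?_, Or.inr ⟨rfl, rfl⟩⟩
      · intro i hi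
        have hmem2 : Cvec i ∈ Submodule.span F (Set.range Dvec) := by
          apply Submodule.subset_span
          refine ⟨i, ?_⟩
          rw [hDvec]
          simp only [if_neg hi]
        rw [dual_pi_sum' g (Cvec i)]
        exact hg0 _ hmem2
      · rw [dual_pi_sum' g (Cvec tsub)]
        exact hg1
      · have hone0 : g one = 0 := by
          have h5 := congrArg g hU₀
          rw [map_sum] at h5
          rw [← h5]
          rw [Finset.sum_eq_zero]
          intro i _
          rw [map_smul, smul_eq_mul]
          by_cases hi : i = tsub
          · rw [hi, hU₀t, zero_mul]
          · have hmem2 : Cvec i ∈ Submodule.span F (Set.range Dvec) := by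
              apply Submodule.subset_span
              refine ⟨i, ?_⟩
              rw [hDvec]
              simp only [if_neg hi]
            rw [hg0 _ hmem2, mul_zero]
        calc ∑ j, g (Pi.single j 1) = ∑ j, g (Pi.single j 1) * one j := by
              simp [hone]
          _ = g one := dual_pi_sum' g one
          _ = 0 := hone0
    · -- case 1: no solution at all
      obtain ⟨g, hg0, hg1⟩ := exists_dual_vanishing hcase
      refine ⟨fun j => g (Pi.single j 1), 0, 1, ?_, ?_, ?_, Or.inl ⟨rfl, rfl⟩⟩
      · intro i _
        rw [dual_pi_sum' g (Cvec i)]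
        exact hg0 _ (Submodule.subset_span (Set.mem_range_self i))
      · rw [dual_pi_sum' g (Cvec tsub)]
        exact hg0 _ (Submodule.subset_span (Set.mem_range_self tsub))
      · calc ∑ j, g (Pi.single j 1) = ∑ j, g (Pi.single j 1) * one j := by
              simp [hone]
          _ = g one := dual_pi_sum' g one
          _ = 1 := hg1
  obtain ⟨Y, βF, γF, hY1, hY2, hY3, hY4⟩ := main
  -- clear denominators
  obtain ⟨b, hb⟩ := IsLocalization.exist_integer_multiples (nonZeroDivisors R) Finset.univ Y
  choose A hA using fun j => hb j (Finset.mem_univ j)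
  have hbne : (b : R) ≠ 0 := nonZeroDivisors.coe_ne_zero b
  have hkey : ∀ w : Fin (d+1) → L, φ (∑ j, A j * X (w j)) = φ (b : R) * ∑ j, Y j * φ (X (w j)) := by
    intro w
    rw [map_sum, Finset.mul_sum]
    apply Finset.sum_congr rfl
    intro j _
    rw [map_mul, hA j, Algebra.smul_def]
    ring
  have hsumA : φ (∑ j, A j) = φ (b : R) * γF := by
    rw [map_sum, ← hY3, Finset.mul_sum]
    exact Finset.sum_congr rfl (fun j _ => by rw [hA j, Algebra.smul_def])
  rcases hY4 with ⟨hβ, hγ⟩ | ⟨hβ, hγ⟩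
  · -- βF = 0, γF = 1 : β := 0, γ := b
    refine ⟨A, 0, (b : R), ?_, ?_, ?_, Or.inl ⟨rfl, hbne⟩⟩
    · intro i hiT hit
      apply hinj
      rw [hkey (fun j => Z j i)]
      have := hY1 ⟨i, hiT⟩ (fun h => hit (congrArg Subtype.val h))
      rw [map_zero]
      rw [show (∑ j, Y j * φ (X (Z j i))) = 0 from this, mul_zero]
    · apply hinj
      rw [hkey (fun j => Z j t)]
      rw [show (∑ j, Y j * φ (X (Z j t))) = βF from hY2, hβ, mul_zero, map_zero]
    · apply hinj
      rw [hsumA, hγ, mul_one]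
  · -- βF = 1, γF = 0 : β := b, γ := 0
    refine ⟨A, (b : R), 0, ?_, ?_, ?_, Or.inr ⟨hbne, rfl⟩⟩
    · intro i hiT hit
      apply hinj
      rw [hkey (fun j => Z j i)]
      have := hY1 ⟨i, hiT⟩ (fun h => hit (congrArg Subtype.val h))
      rw [map_zero]
      rw [show (∑ j, Y j * φ (X (Z j i))) = 0 from this, mul_zero]
    · apply hinj
      rw [hkey (fun j => Z j t)]
      rw [show (∑ j, Y j * φ (X (Z j t))) = βF from hY2, hβ, mul_one]
    · apply hinj
      rw [hsumA, hγ, mul_zero, map_zero]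

/-- Existence of a good real evaluation point. -/
lemma exists_good_y :
    ∃ y : L → ℝ, (∀ z : L, y z ≠ 0) ∧
      ∀ (T : Finset (Fin d)) (hT : T.Nonempty) (Z : Fin (d+1) → Fin d → L),
        (∀ j, ∀ i ∈ T, rk (Z j i) = (i : ℕ) + 1) →
        (Function.Injective fun j => Z j (T.max' hT)) →
        ∀ u : Fin d → ℝ, (∀ j, ∑ i ∈ T, u i * y (Z j i) = 1) →
        u (T.max' hT) = 0 := by
  classical
  have key : ∀ (T : Finset (Fin d)) (Z : Fin (d+1) → Fin d → L),
      ∃ (A : Fin (d+1) → MvPolynomial L ℚ) (β γ : MvPolynomial L ℚ),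
      (∀ hT : T.Nonempty, (∀ j, ∀ i ∈ T, rk (Z j i) = (i : ℕ) + 1) →
        (Function.Injective fun j => Z j (T.max' hT)) →
        ((∀ i ∈ T, i ≠ T.max' hT → ∑ j, A j * X (Z j i) = 0) ∧
         (∑ j, A j * X (Z j (T.max' hT)) = β) ∧ (∑ j, A j = γ) ∧
         ((β = 0 ∧ γ ≠ 0) ∨ (β ≠ 0 ∧ γ = 0)))) ∧ (β ≠ 0 ∨ γ ≠ 0) := by
    intro T Z
    by_cases hg : ∃ hT : T.Nonempty, (∀ j, ∀ i ∈ T, rk (Z j i) = (i : ℕ) + 1) ∧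
        (Function.Injective fun j => Z j (T.max' hT))
    · obtain ⟨hT, hr, hi⟩ := hg
      obtain ⟨A, β, γ, h1, h2, h3, h4⟩ := cert_exists rk d T hT Z hr hi
      refine ⟨A, β, γ, fun hT' hr' hi' => ⟨h1, h2, h3, h4⟩, ?_⟩
      rcases h4 with ⟨_, h⟩ | ⟨h, _⟩
      · exact Or.inr h
      · exact Or.inl h
    · exact ⟨0, 1, 1, fun hT hr hi => absurd ⟨hT, hr, hi⟩ hg, Or.inl one_ne_zero⟩
  choose A β γ hAspec hne using key
  have hgne : ∀ T Z, (if β T Z = 0 then γ T Z else β T Z) ≠ 0 := by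
    intro T Z
    by_cases hβ : β T Z = 0
    · rw [if_pos hβ]
      rcases hne T Z with h | h
      · exact absurd hβ h
      · exact h
    · rw [if_neg hβ]
      exact hβ
  set P : MvPolynomial L ℚ := (∏ z : L, X z) *
    ∏ σ : Finset (Fin d) × (Fin (d+1) → Fin d → L), (if β σ.1 σ.2 = 0 then γ σ.1 σ.2 else β σ.1 σ.2)
    with hPdef
  have hPne : P ≠ 0 := by
    apply mul_ne_zero
    · rw [Finset.prod_ne_zero_iff]
      exact fun z _ => X_ne_zero z
    · rw [Finset.prod_ne_zero_iff]
      exact fun σ _ => hgne σ.1 σ.2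
  have hmapne : MvPolynomial.map (algebraMap ℚ ℝ) P ≠ 0 := by
    intro h
    exact hPne (MvPolynomial.map_injective _ (algebraMap ℚ ℝ).injective (by rw [h, map_zero]))
  have hex : ∃ yy : L → ℝ, MvPolynomial.eval yy (MvPolynomial.map (algebraMap ℚ ℝ) P) ≠ 0 := by
    by_contra hcon
    push_neg at hcon
    apply hmapne
    apply MvPolynomial.funext
    intro x
    rw [hcon x, map_zero]
  obtain ⟨yy, hyy⟩ := hex
  set ev : MvPolynomial L ℚ →+* ℝ := MvPolynomial.eval₂Hom (algebraMap ℚ ℝ) yy with hev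
  have hevP : ev P ≠ 0 := by
    rw [MvPolynomial.eval_map] at hyy
    exact hyy
  have hevX : ∀ z : L, ev (X z) = yy z := fun z => MvPolynomial.eval₂_X _ _ _
  have hfac : ∀ T Z, ev (if β T Z = 0 then γ T Z else β T Z) ≠ 0 := by
    intro T Z h0
    apply hevP
    rw [hPdef, map_mul]
    apply mul_eq_zero_of_right
    rw [map_prod]
    exact Finset.prod_eq_zero (Finset.mem_univ ((T, Z) :
      Finset (Fin d) × (Fin (d+1) → Fin d → L))) h0
  have hyyne : ∀ z : L, yy z ≠ 0 := by
    intro z h0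
    apply hevP
    rw [hPdef, map_mul]
    apply mul_eq_zero_of_left
    rw [map_prod]
    exact Finset.prod_eq_zero (Finset.mem_univ z) (by rw [hevX z]; exact h0)
  refine ⟨yy, hyyne, ?_⟩
  intro T hT Z hrank htops u hu
  obtain ⟨h1, h2, h3, h4⟩ := hAspec T Z hT hrank htops
  have hevsum : ∀ i : Fin d, ev (∑ j, A T Z j * X (Z j i))
      = ∑ j, ev (A T Z j) * yy (Z j i) := by
    intro i
    rw [map_sum]
    exact Finset.sum_congr rfl (fun j _ => by rw [map_mul, hevX])
  have hmain : ∑ j, ev (A T Z j) * (∑ i ∈ T, u i * yy (Z j i)) = ev (γ T Z) := by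
    have e1 : ∀ j ∈ (Finset.univ : Finset (Fin (d+1))),
        ev (A T Z j) * (∑ i ∈ T, u i * yy (Z j i)) = ev (A T Z j) := by
      intro j _
      rw [hu j, mul_one]
    rw [Finset.sum_congr rfl e1, ← map_sum, h3]
  have hswap : ∑ j, ev (A T Z j) * (∑ i ∈ T, u i * yy (Z j i))
      = ∑ i ∈ T, u i * (∑ j, ev (A T Z j) * yy (Z j i)) := by
    have e2 : ∀ j ∈ (Finset.univ : Finset (Fin (d+1))),
        ev (A T Z j) * (∑ i ∈ T, u i * yy (Z j i))
          = ∑ i ∈ T, ev (A T Z j) * (u i * yy (Z j i)) := by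
      intro j _
      rw [Finset.mul_sum]
    rw [Finset.sum_congr rfl e2, Finset.sum_comm]
    apply Finset.sum_congr rfl
    intro i _
    rw [Finset.mul_sum]
    apply Finset.sum_congr rfl
    intro j _
    ring
  have hE : ∀ i ∈ T, i ≠ T.max' hT → (∑ j, ev (A T Z j) * yy (Z j i)) = 0 := by
    intro i hiT hit
    rw [← hevsum i, h1 i hiT hit, map_zero]
  have hEt : (∑ j, ev (A T Z j) * yy (Z j (T.max' hT))) = ev (β T Z) := by
    rw [← hevsum (T.max' hT), h2]
  have hfinal : u (T.max' hT) * ev (β T Z) = ev (γ T Z) := by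
    rw [← hmain, hswap]
    rw [Finset.sum_eq_single_of_mem (T.max' hT) (T.max'_mem hT)]
    · rw [hEt]
    · intro i hiT hit
      rw [hE i hiT hit, mul_zero]
  rcases h4 with ⟨hβ0, hγ0⟩ | ⟨hβ0, hγ0⟩
  · exfalso
    apply hfac T Z
    rw [if_pos hβ0]
    rw [← hfinal, hβ0, map_zero, mul_zero]
  · have hβne : ev (β T Z) ≠ 0 := by
      have h5 := hfac T Z
      rw [if_neg hβ0] at h5
      exact h5
    rw [hγ0, map_zero] at hfinal
    rcases mul_eq_zero.1 hfinal with h | h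
    · exact h
    · exact absurd h hβne

end Algebraic

section Construction
variable {L : Type*} [Fintype L] [Lattice L] [BoundedOrder L]
variable (rk : L → ℕ) (d : ℕ) (y : L → ℝ)
local notation "Aty" => {a : L // rk a = 1}

noncomputable def outSup (S : Finset Aty) (x : Aty → ℝ) : ℝ :=
  if h : Sᶜ.Nonempty then Sᶜ.sup' h x else 0

noncomputable def cW (S : Finset Aty) (x : Aty → ℝ) : ℝ :=
  if h : S.Nonempty then (S.card : ℝ) * max (S.inf' h x - outSup rk S x) 0 else 0

noncomputable def jn (S : Finset Aty) : L := S.sup (fun a => (a : L))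

noncomputable def wv (S : Finset Aty) : Fin d → ℝ :=
  if h : 1 ≤ rk (jn rk S) ∧ rk (jn rk S) ≤ d then
    Pi.single (⟨rk (jn rk S) - 1, by omega⟩ : Fin d) ((y (jn rk S))⁻¹) else 0

noncomputable def Df (x : Aty → ℝ) : ℝ := ∑ S ∈ (Finset.univ : Finset (Finset Aty)), cW rk S x

noncomputable def fmap (x : Aty → ℝ) : Fin d → ℝ :=
  (Df rk x)⁻¹ • ∑ S ∈ (Finset.univ : Finset (Finset Aty)), cW rk S x • wv rk d y S

lemma cW_nonneg (S : Finset Aty) (x : Aty → ℝ) : 0 ≤ cW rk S x := by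
  unfold cW; split
  · exact mul_nonneg (by positivity) (le_max_right _ _)
  · exact le_rfl

lemma wv_apply (S : Finset Aty) (i : Fin d) :
    wv rk d y S i = if rk (jn rk S) = (i : ℕ) + 1 then (y (jn rk S))⁻¹ else 0 := by
  unfold wv
  split
  · rename_i h
    rw [Pi.single_apply]
    have hiff : (i = (⟨rk (jn rk S) - 1, by omega⟩ : Fin d)) ↔ rk (jn rk S) = (i : ℕ) + 1 := by
      rw [Fin.ext_iff]
      simp only []
      omega
    by_cases hcase : rk (jn rk S) = (i : ℕ) + 1
    · rw [if_pos (hiff.2 hcase), if_pos hcase]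
    · rw [if_neg (fun hh => hcase (hiff.1 hh)), if_neg hcase]
  · rename_i h
    have : rk (jn rk S) ≠ (i : ℕ) + 1 := by
      intro hcon
      apply h
      constructor
      · omega
      · have := i.isLt; omega
    rw [if_neg this]
    rfl

/-- the main structure lemma for points of a face. -/
lemma face_struct (hbot : rk ⊥ = 0) (hcov : ∀ x y : L, x ⋖ y → rk y = rk x + 1)
    (hd : 1 ≤ d) (hy : ∀ z : L, y z ≠ 0)
    (hD : ∀ x ∈ stdSimplex ℝ Aty, 0 < Df rk x)
    (c : L) (hc : rk c = d) (x : Aty → ℝ)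
    (hx : x ∈ geomFace {a : Aty | (a : L) ≤ c}) :
    (Finset.univ.filter fun i : Fin d => fmap rk d y x i ≠ 0).Nonempty ∧
    ∃ Z : Fin d → L,
      (∀ i ∈ Finset.univ.filter fun i : Fin d => fmap rk d y x i ≠ 0,
          rk (Z i) = (i : ℕ) + 1 ∧ Z i ≤ c) ∧
      ∑ i ∈ Finset.univ.filter fun i : Fin d => fmap rk d y x i ≠ 0,
          fmap rk d y x i * y (Z i) = 1 := by
  obtain ⟨hxs, hxface⟩ := hx
  have hnn : ∀ a, 0 ≤ x a := hxs.1
  have hDpos : 0 < Df rk x := hD x hxs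
  set u := fmap rk d y x with hu
  set T := Finset.univ.filter (fun i : Fin d => u i ≠ 0) with hT
  set SS := Finset.univ.filter (fun S : Finset Aty => cW rk S x ≠ 0) with hSS
  have hSne : ∀ S ∈ SS, S.Nonempty := by
    intro S hS
    by_contra h
    apply (Finset.mem_filter.1 hS).2
    unfold cW
    rw [dif_neg h]
  have hgap : ∀ S ∈ SS, ∀ hn : S.Nonempty, outSup rk S x < S.inf' hn x := by
    intro S hS hn
    have h2 := (Finset.mem_filter.1 hS).2
    by_contra hcon
    push_neg at hcon
    apply h2
    unfold cW
    rw [dif_pos hn]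
    have hm : max (S.inf' hn x - outSup rk S x) 0 = 0 := max_eq_right (by linarith)
    rw [hm, mul_zero]
  have houtnn : ∀ S : Finset Aty, 0 ≤ outSup rk S x := by
    intro S
    unfold outSup
    split
    · rename_i h
      obtain ⟨b, hb⟩ := h
      exact le_trans (hnn b) (Finset.le_sup' x hb)
    · exact le_rfl
  have hposmem : ∀ S ∈ SS, ∀ a ∈ S, 0 < x a := by
    intro S hS a ha
    have hn := hSne S hS
    have h1 := hgap S hS hn
    have h3 : S.inf' hn x ≤ x a := Finset.inf'_le x ha
    have h4 := houtnn S
    linarith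
  have hlec : ∀ S ∈ SS, ∀ a ∈ S, (a : L) ≤ c := by
    intro S hS a ha
    by_contra hcon
    have h1 := hxface a hcon
    have h2 := hposmem S hS a ha
    rw [h1] at h2
    exact lt_irrefl _ h2
  have hcompare : ∀ S ∈ SS, ∀ a ∈ S, ∀ b, b ∉ S → x b < x a := by
    intro S hS a ha b hb
    have hn := hSne S hS
    have h1 : x b ≤ outSup rk S x := by
      unfold outSup
      have hbc : b ∈ Sᶜ := Finset.mem_compl.2 hb
      rw [dif_pos ⟨b, hbc⟩]
      exact Finset.le_sup' x hbc
    have h2 := hgap S hS hn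
    have h3 : S.inf' hn x ≤ x a := Finset.inf'_le x ha
    linarith
  have hchain : ∀ S ∈ SS, ∀ S' ∈ SS, S ⊆ S' ∨ S' ⊆ S := by
    intro S hS S' hS'
    by_cases hss : S ⊆ S'
    · left; exact hss
    · right
      obtain ⟨a, haS, haS'⟩ := Finset.not_subset.1 hss
      intro b hb
      by_contra hbS
      have h1 := hcompare S hS a haS b hbS
      have h2 := hcompare S' hS' b hb a haS'
      linarith
  have hjle : ∀ S ∈ SS, jn rk S ≤ c := by
    intro S hS
    exact Finset.sup_le (fun a ha => hlec S hS a ha)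
  have hjrk : ∀ S ∈ SS, 1 ≤ rk (jn rk S) ∧ rk (jn rk S) ≤ d := by
    intro S hS
    obtain ⟨a, ha⟩ := hSne S hS
    constructor
    · have h1 : (a : L) ≤ jn rk S := Finset.le_sup ha
      have h2 := rk_le_of_le rk hcov h1
      rw [a.2] at h2
      exact h2
    · have h2 := rk_le_of_le rk hcov (hjle S hS)
      rw [hc] at h2
      exact h2
  have hsame : ∀ S ∈ SS, ∀ S' ∈ SS, rk (jn rk S) = rk (jn rk S') → jn rk S = jn rk S' := by
    have key : ∀ S ∈ SS, ∀ S' ∈ SS, S ⊆ S' → rk (jn rk S) = rk (jn rk S') → jn rk S = jn rk S' := by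
      intro S hS S' hS' hsub hr
      have hle : jn rk S ≤ jn rk S' := Finset.sup_mono hsub
      rcases eq_or_lt_of_le hle with he | hlt
      · exact he
      · exact absurd hr (by have := rk_lt_of_lt rk hcov hlt; omega)
    intro S hS S' hS' hr
    rcases hchain S hS S' hS' with h | h
    · exact key S hS S' hS' h hr
    · exact (key S' hS' S hS h hr.symm).symm
  -- coordinate formula
  have hcoord : ∀ i : Fin d, u i = (Df rk x)⁻¹ *
      ∑ S ∈ SS.filter (fun S => rk (jn rk S) = (i : ℕ) + 1), cW rk S x * (y (jn rk S))⁻¹ := by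
    intro i
    have e0 : u i = (Df rk x)⁻¹ * ∑ S ∈ (Finset.univ : Finset (Finset Aty)),
        cW rk S x * wv rk d y S i := by
      rw [hu]
      unfold fmap
      rw [Pi.smul_apply, Finset.sum_apply, smul_eq_mul]
      congr 1
    rw [e0]
    congr 1
    have e1 : ∀ S ∈ (Finset.univ : Finset (Finset Aty)), cW rk S x * wv rk d y S i =
        if rk (jn rk S) = (i : ℕ) + 1 then cW rk S x * (y (jn rk S))⁻¹ else 0 := by
      intro S _
      rw [wv_apply]
      split
      · rfl
      · rw [mul_zero]
    rw [Finset.sum_congr rfl e1, ← Finset.sum_filter]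
    apply (Finset.sum_subset _ _).symm
    · exact Finset.filter_subset_filter _ (Finset.subset_univ SS)
    · intro S hS1 hS2
      have hcw : cW rk S x = 0 := by
        by_contra hcw
        apply hS2
        rw [Finset.mem_filter] at hS1 ⊢
        exact ⟨Finset.mem_filter.2 ⟨Finset.mem_univ S, hcw⟩, hS1.2⟩
      rw [hcw, zero_mul]
  -- choice of chain elements
  set Fi : Fin d → Finset (Finset Aty) :=
    fun i => SS.filter (fun S => rk (jn rk S) = (i : ℕ) + 1) with hFi
  set Zfun : Fin d → L := fun i => if h : (Fi i).Nonempty then jn rk h.choose else ⊥ with hZ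
  have hZspec : ∀ i : Fin d, ∀ h : (Fi i).Nonempty,
      rk (Zfun i) = (i : ℕ) + 1 ∧ Zfun i ≤ c ∧ ∀ S ∈ Fi i, jn rk S = Zfun i := by
    intro i h
    have hmem : h.choose ∈ SS ∧ rk (jn rk h.choose) = (i : ℕ) + 1 :=
      Finset.mem_filter.1 h.choose_spec
    have hZi : Zfun i = jn rk h.choose := dif_pos h
    refine ⟨by rw [hZi]; exact hmem.2, by rw [hZi]; exact hjle _ hmem.1, ?_⟩
    intro S hS
    have hS' : S ∈ SS ∧ rk (jn rk S) = (i : ℕ) + 1 := Finset.mem_filter.1 hS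
    rw [hZi]
    exact hsame S hS'.1 _ hmem.1 (by rw [hS'.2, hmem.2])
  have hui : ∀ i : Fin d, ∀ h : (Fi i).Nonempty,
      u i = (Df rk x)⁻¹ * (∑ S ∈ Fi i, cW rk S x) * (y (Zfun i))⁻¹ := by
    intro i h
    rw [hcoord i]
    have : ∀ S ∈ Fi i, cW rk S x * (y (jn rk S))⁻¹ = cW rk S x * (y (Zfun i))⁻¹ := by
      intro S hS
      rw [(hZspec i h).2.2 S hS]
    rw [Finset.sum_congr rfl this, ← Finset.sum_mul, mul_assoc]
  have hmpos : ∀ i : Fin d, ∀ h : (Fi i).Nonempty, 0 < ∑ S ∈ Fi i, cW rk S x := by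
    intro i h
    obtain ⟨S, hS⟩ := h
    refine Finset.sum_pos' (fun S' _ => cW_nonneg rk S' x) ⟨S, hS, ?_⟩
    have := (Finset.mem_filter.1 ((Finset.mem_filter.1 hS).1)).2
    exact lt_of_le_of_ne (cW_nonneg rk S x) (Ne.symm this)
  have hTiff : ∀ i : Fin d, i ∈ T ↔ (Fi i).Nonempty := by
    intro i
    rw [hT, Finset.mem_filter]
    constructor
    · rintro ⟨-, hne⟩
      by_contra hcon
      apply hne
      rw [hcoord i]
      rw [show (SS.filter (fun S => rk (jn rk S) = (i : ℕ) + 1)) = ∅ from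
        Finset.not_nonempty_iff_eq_empty.1 hcon, Finset.sum_empty, mul_zero]
    · intro h
      refine ⟨Finset.mem_univ i, ?_⟩
      rw [hui i h]
      have h1 : (Df rk x)⁻¹ ≠ 0 := inv_ne_zero hDpos.ne'
      have h2 : (∑ S ∈ Fi i, cW rk S x) ≠ 0 := (hmpos i h).ne'
      have h3 : (y (Zfun i))⁻¹ ≠ 0 := inv_ne_zero (hy _)
      exact mul_ne_zero (mul_ne_zero h1 h2) h3
  -- T is nonempty
  have hSSne : SS.Nonempty := by
    by_contra hcon
    rw [Finset.not_nonempty_iff_eq_empty] at hcon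
    have : Df rk x = 0 := by
      unfold Df
      apply Finset.sum_eq_zero
      intro S _
      by_contra hne
      have : S ∈ SS := Finset.mem_filter.2 ⟨Finset.mem_univ S, hne⟩
      rw [hcon] at this
      exact absurd this (Finset.notMem_empty S)
    rw [this] at hDpos
    exact lt_irrefl _ hDpos
  have hTne : T.Nonempty := by
    obtain ⟨S0, hS0⟩ := hSSne
    have hw := hjrk S0 hS0
    set i0 : Fin d := ⟨rk (jn rk S0) - 1, by omega⟩ with hi0
    have : S0 ∈ Fi i0 := by
      rw [hFi, Finset.mem_filter]
      exact ⟨hS0, by rw [hi0]; simp only []; omega⟩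
    exact ⟨i0, (hTiff i0).2 ⟨S0, this⟩⟩
  refine ⟨hTne, Zfun, ?_, ?_⟩
  · intro i hi
    have h := (hTiff i).1 hi
    exact ⟨(hZspec i h).1, (hZspec i h).2.1⟩
  · -- the sum
    have step1 : ∀ i ∈ T, u i * y (Zfun i) = (Df rk x)⁻¹ * ∑ S ∈ Fi i, cW rk S x := by
      intro i hi
      have h := (hTiff i).1 hi
      rw [hui i h, mul_assoc, inv_mul_cancel₀ (hy _), mul_one]
    rw [Finset.sum_congr rfl step1, ← Finset.mul_sum]
    have step2 : ∑ i ∈ T, ∑ S ∈ Fi i, cW rk S x = Df rk x := by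
      set g : Finset Aty → Fin d := fun S =>
        if h : 1 ≤ rk (jn rk S) ∧ rk (jn rk S) ≤ d then ⟨rk (jn rk S) - 1, by omega⟩
        else ⟨0, hd⟩ with hg
      have hgmem : ∀ S ∈ SS, g S ∈ T := by
        intro S hS
        have hw := hjrk S hS
        have hgS : g S = ⟨rk (jn rk S) - 1, by omega⟩ := by rw [hg]; exact dif_pos hw
        apply (hTiff _).2
        refine ⟨S, ?_⟩
        rw [hFi, Finset.mem_filter]
        refine ⟨hS, ?_⟩
        rw [hgS]
        simp only []
        omega
      have hfib : ∀ i ∈ T, SS.filter (fun S => g S = i) = Fi i := by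
        intro i _
        rw [hFi]
        apply Finset.filter_congr
        intro S hS
        have hw := hjrk S hS
        have hgS : g S = ⟨rk (jn rk S) - 1, by omega⟩ := by rw [hg]; exact dif_pos hw
        rw [hgS]
        simp only [Fin.ext_iff]
        constructor
        · intro hh; omega
        · intro hh; omega
      have := Finset.sum_fiberwise_of_maps_to hgmem (fun S => cW rk S x)
      rw [Finset.sum_congr rfl (fun i hi => by rw [← hfib i hi])]
      rw [this]
      apply Finset.sum_subset (Finset.subset_univ SS)
      intro S _ hS2
      by_contra hne
      exact hS2 (Finset.mem_filter.2 ⟨Finset.mem_univ S, hne⟩)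
    rw [step2, inv_mul_cancel₀ hDpos.ne']

/-- positivity facts about cW for a member of the simplex -/
lemma cW_pos_of (S : Finset Aty) (x : Aty → ℝ) (hS : S.Nonempty)
    (h : outSup rk S x < S.inf' hS x) : 0 < cW rk S x := by
  unfold cW
  rw [dif_pos hS]
  have : (0:ℝ) < max (S.inf' hS x - outSup rk S x) 0 := by
    rw [lt_max_iff]; left; linarith
  have hc : (0:ℝ) < S.card := by exact_mod_cast hS.card_pos
  positivity

lemma Df_pos (x : Aty → ℝ) (hx : x ∈ stdSimplex ℝ Aty) : 0 < Df rk x := by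
  have hne : Nonempty Aty := by
    by_contra h
    rw [not_nonempty_iff] at h
    have := hx.2
    rw [Finset.sum_of_isEmpty] at this
    norm_num at this
  -- some coordinate is positive
  have hpos : ∃ a : Aty, 0 < x a := by
    by_contra h
    push_neg at h
    have : ∑ a, x a ≤ 0 := Finset.sum_nonpos (fun a _ => h a)
    rw [hx.2] at this; norm_num at this
  obtain ⟨a0, ha0⟩ := hpos
  -- the max value
  set μ := Finset.univ.sup' (Finset.univ_nonempty) x with hμ
  have hμpos : 0 < μ := lt_of_lt_of_le ha0 (Finset.le_sup' x (Finset.mem_univ a0))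
  set S : Finset Aty := Finset.univ.filter (fun a => x a = μ) with hSdef
  have hSne : S.Nonempty := by
    obtain ⟨i, _, hi⟩ := Finset.exists_mem_eq_sup' (Finset.univ_nonempty) x
    exact ⟨i, by simp [hSdef, hi.symm, hμ]⟩
  have hinf : S.inf' hSne x = μ := by
    apply le_antisymm
    · obtain ⟨i, hi⟩ := hSne
      refine le_trans (Finset.inf'_le x hi) ?_
      have := (Finset.mem_filter.1 hi).2
      rw [this]
    · refine Finset.le_inf' _ _ (fun b hb => ?_)
      rw [(Finset.mem_filter.1 hb).2]
  have hout : outSup rk S x < μ := by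
    unfold outSup
    split
    · rename_i h
      rw [Finset.sup'_lt_iff]
      intro b hb
      have hbS : b ∉ S := Finset.mem_compl.1 hb
      have hble : x b ≤ μ := Finset.le_sup' x (Finset.mem_univ b)
      have hbne : x b ≠ μ := by
        intro hcon
        exact hbS (by simp [hSdef, hcon])
      exact lt_of_le_of_ne hble hbne
    · exact hμpos
  have h1 : 0 < cW rk S x := cW_pos_of rk S x hSne (by rw [hinf]; exact hout)
  unfold Df
  exact Finset.sum_pos' (fun i _ => cW_nonneg rk i x) ⟨S, Finset.mem_univ S, h1⟩


lemma cW_continuous (S : Finset Aty) : Continuous fun x : Aty → ℝ => cW rk S x := by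
  unfold cW
  split
  · refine Continuous.mul continuous_const ?_
    refine Continuous.max ?_ continuous_const
    refine Continuous.sub ?_ ?_
    · exact Continuous.finset_inf'_apply _ (fun i _ => continuous_apply i)
    · unfold outSup
      split
      · exact Continuous.finset_sup'_apply _ (fun i _ => continuous_apply i)
      · exact continuous_const
  · exact continuous_const

lemma Df_continuous : Continuous fun x : Aty → ℝ => Df rk x :=
  continuous_finset_sum _ (fun S _ => cW_continuous rk S)

lemma fmap_continuous_on {s : Set (Aty → ℝ)} (hs : ∀ x ∈ s, Df rk x ≠ 0) :
    ContinuousOn (fmap rk d y) s := by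
  unfold fmap
  apply ContinuousOn.fun_smul
  · exact ContinuousOn.inv₀ (Df_continuous rk).continuousOn hs
  · exact (continuous_finset_sum _ (fun S _ => (cW_continuous rk S).smul continuous_const)).continuousOn


end Construction


theorem exists_map_few_coatoms_cover (d : ℕ) (hd : 1 ≤ d)
    (L : Type*) [Fintype L] [Lattice L] [BoundedOrder L]
    (rk : L → ℕ) (hbot : rk ⊥ = 0)
    (hcov : ∀ x y : L, x ⋖ y → rk y = rk x + 1)
    (htop : rk ⊤ = d + 1) :
    ∃ f : ({a : L // rk a = 1} → ℝ) → (Fin d → ℝ),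
      ContinuousOn f (stdSimplex ℝ {a : L // rk a = 1}) ∧
      ∀ u : Fin d → ℝ,
        {c : L | rk c = d ∧ u ∈ f '' geomFace {a : {a : L // rk a = 1} | (a : L) ≤ c}}.ncard ≤
          d * sSup {k | ∃ a : L, rk a = 1 ∧ {c : L | rk c = d ∧ a ≤ c}.ncard = k} := by
  classical
  obtain ⟨y, hy, hmaster⟩ := exists_good_y (L := L) rk d
  have hDpos : ∀ x ∈ stdSimplex ℝ {a : L // rk a = 1}, 0 < Df rk x :=
    fun x hx => Df_pos rk x hx
  refine ⟨fmap rk d y, fmap_continuous_on rk d y (fun x hx => (hDpos x hx).ne'), ?_⟩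
  intro u
  set M := sSup {k | ∃ a : L, rk a = 1 ∧ {c : L | rk c = d ∧ a ≤ c}.ncard = k} with hM
  have hbdd : BddAbove {k | ∃ a : L, rk a = 1 ∧ {c : L | rk c = d ∧ a ≤ c}.ncard = k} := by
    refine ⟨Nat.card L, ?_⟩
    rintro k ⟨a, -, hk⟩
    rw [← hk]
    calc {c : L | rk c = d ∧ a ≤ c}.ncard ≤ (Set.univ : Set L).ncard :=
          Set.ncard_le_ncard (Set.subset_univ _) Set.finite_univ
      _ = Nat.card L := Set.ncard_univ L
  set Cu := {c : L | rk c = d ∧ u ∈ fmap rk d y '' geomFace {a : {a : L // rk a = 1} | (a : L) ≤ c}}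
    with hCu
  set T := Finset.univ.filter (fun i : Fin d => u i ≠ 0) with hTdef
  have hface : ∀ c ∈ Cu, T.Nonempty ∧ ∃ Z : Fin d → L,
      (∀ i ∈ T, rk (Z i) = (i : ℕ) + 1 ∧ Z i ≤ c) ∧
      ∑ i ∈ T, u i * y (Z i) = 1 := by
    intro c hc
    obtain ⟨hrkc, x, hxface, hxeq⟩ := hc
    have hfs := face_struct rk d y hbot hcov hd hy hDpos c hrkc x hxface
    rw [hxeq] at hfs
    exact hfs
  by_cases hTne : T.Nonempty
  swap
  · have hCuempty : Cu = ∅ := by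
      rw [Set.eq_empty_iff_forall_notMem]
      intro c hc
      exact hTne (hface c hc).1
    rw [hCuempty, Set.ncard_empty]
    exact Nat.zero_le _
  · set t : Fin d := T.max' hTne with htdef
    have htT : t ∈ T := T.max'_mem hTne
    have hut : u t ≠ 0 := (Finset.mem_filter.1 htT).2
    have hface2 : ∀ c : L, c ∈ Cu → ∃ Z : Fin d → L,
        (∀ i ∈ T, rk (Z i) = (i : ℕ) + 1 ∧ Z i ≤ c) ∧
        ∑ i ∈ T, u i * y (Z i) = 1 := fun c hc => (hface c hc).2
    choose Zfun hZ1 hZ2 using hface2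
    set top : L → L := fun c => if hc : c ∈ Cu then Zfun c hc t else ⊥ with htopdef
    have htopspec : ∀ c (hc : c ∈ Cu), top c = Zfun c hc t := by
      intro c hc
      rw [htopdef]
      exact dif_pos hc
    set CuF : Finset L := Finset.univ.filter (fun c => c ∈ Cu) with hCuF
    have hCuFmem : ∀ c : L, c ∈ CuF ↔ c ∈ Cu := by
      intro c
      rw [hCuF, Finset.mem_filter]
      exact ⟨fun h => h.2, fun h => ⟨Finset.mem_univ c, h⟩⟩
    set TopsF : Finset L := CuF.image top with hTopsF
    -- key cardinality bound
    have hTopsCard : TopsF.card ≤ d := by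
      by_contra hcon
      push_neg at hcon
      obtain ⟨E, hEsub, hEcard⟩ := Finset.exists_subset_card_eq (n := d + 1) hcon
      have hEw : ∀ w ∈ E, ∃ c, ∃ hc : c ∈ Cu, top c = w := by
        intro w hw
        have := hEsub hw
        rw [hTopsF, Finset.mem_image] at this
        obtain ⟨c, hcF, hcw⟩ := this
        exact ⟨c, (hCuFmem c).1 hcF, hcw⟩
      set eq1 : Fin (d+1) ≃ {x // x ∈ E} := (Fintype.equivOfCardEq (by
        rw [Fintype.card_fin, Fintype.card_coe, hEcard])) with heq1
      have hwmem : ∀ j : Fin (d+1), ((eq1 j : {x // x ∈ E}) : L) ∈ E := fun j => (eq1 j).2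
      choose cfun hcfun1 hcfun2 using fun j : Fin (d+1) => hEw _ (hwmem j)
      set Zbig : Fin (d+1) → Fin d → L := fun j => Zfun (cfun j) (hcfun1 j) with hZbig
      have hrankbig : ∀ j, ∀ i ∈ T, rk (Zbig j i) = (i : ℕ) + 1 :=
        fun j i hi => (hZ1 (cfun j) (hcfun1 j) i hi).1
      have htopsbig : Function.Injective (fun j => Zbig j t) := by
        intro j j' hjj
        have h1 : Zbig j t = ((eq1 j : {x // x ∈ E}) : L) := by
          show Zfun (cfun j) (hcfun1 j) t = _
          rw [← htopspec (cfun j) (hcfun1 j), hcfun2 j]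
        have h2 : Zbig j' t = ((eq1 j' : {x // x ∈ E}) : L) := by
          show Zfun (cfun j') (hcfun1 j') t = _
          rw [← htopspec (cfun j') (hcfun1 j'), hcfun2 j']
        have h3 : ((eq1 j : {x // x ∈ E}) : L) = ((eq1 j' : {x // x ∈ E}) : L) := by
          rw [← h1, ← h2]
          exact hjj
        exact eq1.injective (Subtype.ext h3)
      have hequs : ∀ j, ∑ i ∈ T, u i * y (Zbig j i) = 1 :=
        fun j => hZ2 (cfun j) (hcfun1 j)
      have := hmaster T hTne Zbig hrankbig htopsbig u hequs
      exact hut this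
    -- covering bound
    have hcover : CuF ⊆ TopsF.biUnion
        (fun z => Finset.univ.filter (fun c => rk c = d ∧ z ≤ c)) := by
      intro c hcF
      have hc := (hCuFmem c).1 hcF
      rw [Finset.mem_biUnion]
      refine ⟨top c, Finset.mem_image_of_mem top hcF, ?_⟩
      rw [Finset.mem_filter]
      refine ⟨Finset.mem_univ c, hc.1, ?_⟩
      rw [htopspec c hc]
      exact (hZ1 c hc t htT).2
    have hperz : ∀ z ∈ TopsF,
        (Finset.univ.filter (fun c => rk c = d ∧ z ≤ c)).card ≤ M := by
      intro z hz
      rw [hTopsF, Finset.mem_image] at hz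
      obtain ⟨c0, hc0F, hc0z⟩ := hz
      have hc0 := (hCuFmem c0).1 hc0F
      have hrkz : rk z = (t : ℕ) + 1 := by
        rw [← hc0z, htopspec c0 hc0]
        exact (hZ1 c0 hc0 t htT).1
      have hzbot : z ≠ ⊥ := by
        intro h
        rw [h, hbot] at hrkz
        omega
      obtain ⟨a, hrka, haz⟩ := exists_atom_le rk hbot hcov hzbot
      have hsub : Finset.univ.filter (fun c => rk c = d ∧ z ≤ c) ⊆
          Finset.univ.filter (fun c => rk c = d ∧ a ≤ c) := by
        intro c hcm
        rw [Finset.mem_filter] at hcm ⊢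
        exact ⟨hcm.1, hcm.2.1, le_trans haz hcm.2.2⟩
      refine le_trans (Finset.card_le_card hsub) ?_
      have hcard : (Finset.univ.filter (fun c => rk c = d ∧ a ≤ c)).card =
          {c : L | rk c = d ∧ a ≤ c}.ncard := by
        rw [Set.ncard_eq_toFinset_card', Set.toFinset_setOf]
      rw [hcard, hM]
      exact le_csSup hbdd ⟨a, hrka, rfl⟩
    have hLHS : Cu.ncard = CuF.card := by
      rw [Set.ncard_eq_toFinset_card']
      have heq : Cu.toFinset = CuF := by
        ext c
        rw [Set.mem_toFinset]
        exact (hCuFmem c).symm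
      rw [heq]
    rw [hLHS]
    calc CuF.card ≤ (TopsF.biUnion (fun z => Finset.univ.filter (fun c => rk c = d ∧ z ≤ c))).card :=
          Finset.card_le_card hcover
      _ ≤ ∑ z ∈ TopsF, (Finset.univ.filter (fun c => rk c = d ∧ z ≤ c)).card :=
          Finset.card_biUnion_le
      _ ≤ TopsF.card • M := Finset.sum_le_card_nsmul _ _ _ hperz
      _ = TopsF.card * M := by rw [smul_eq_mul]
      _ ≤ d * M := Nat.mul_le_mul_right M hTopsCard
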